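/- Let C be a cartesian closed category with terminal object 1 and a fixed object S admitting a global element s₀ : 1 ⟶ S, and let T be the state monad T X = (S × X)^S. Let (X, h) be a T-algebra, f_X = h ∘ (q_{S×X})^* : S × X ⟶ X, and suppose f_X = m ∘ e with e : S × X ⟶ Y an epimorphism and m : Y ⟶ X a monomorphism. Then e has a section; explicitly, σ = γ_{S×X} ∘ η_X ∘ m satisfies e ∘ σ = id_Y, where γ_Z : Z^S ⟶ Z is the composite of Z^{s₀} with the canonical isomorphism Z^1 ≅ Z. -/

import Mathlib

open CategoryTheory CategoryTheory.MonoidalCategory CategoryTheory.Limits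
  CategoryTheory.CartesianMonoidalCategory CategoryTheory.CartesianClosed

variable {C : Type u} [Category.{v} C] [CartesianMonoidalCategory C] [MonoidalClosed C]

/-- Given a global element `s₀ : 1 ⟶ S`, the natural morphism `γ_Z : Z^S ⟶ Z`, composite of
`Z^{s₀}` with the canonical isomorphism `Z^1 ≅ Z`. -/
noncomputable def gamma {S : C} (s₀ : 𝟙_ C ⟶ S) (Z : C) : (S ⟹ Z) ⟶ Z :=
  (MonoidalClosed.pre s₀).app Z ≫ (MonoidalClosed.unitIsoSelf (X := Z)).hom

namespace Stmt9Aux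
set_option linter.unusedSectionVars false

open MonoidalClosed

variable {S : C} (s₀ : 𝟙_ C ⟶ S)

/-- The "insert the point `s₀`" morphism. -/
noncomputable def δ (W : C) : W ⟶ S ⊗ W := lift (toUnit W ≫ s₀) (𝟙 W)

lemma δ_nat {W V : C} (g : W ⟶ V) : g ≫ δ s₀ V = δ s₀ W ≫ (S ◁ g) := by
  apply CartesianMonoidalCategory.hom_ext
  · simp only [δ, Category.assoc, lift_fst, whiskerLeft_fst, lift_fst_assoc]
    rw [← Category.assoc, toUnit_unique (g ≫ toUnit V) (toUnit W)]
  · simp [δ]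

lemma δ_snd (W : C) : δ s₀ W ≫ snd S W = 𝟙 W := lift_snd _ _

lemma leftUnitor_hom_δ (W : C) : (λ_ W).hom ≫ δ s₀ W = s₀ ▷ W := by
  apply CartesianMonoidalCategory.hom_ext
  · simp only [δ, Category.assoc, lift_fst, whiskerRight_fst]
    rw [← Category.assoc, toUnit_unique ((λ_ W).hom ≫ toUnit W) (fst (𝟙_ C) W)]
  · simp only [δ, Category.assoc, lift_snd, Category.comp_id, whiskerRight_snd]
    rw [← Category.comp_id (λ_ W).hom, ← leftUnitor_inv_snd W, Iso.hom_inv_id_assoc]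

lemma uncurry_unitIsoSelf_inv (Z : C) :
    uncurry ((unitIsoSelf (X := Z)).inv) = (λ_ Z).hom := by
  have h := conjugateEquiv_counit (Adjunction.id (C := C)) (ihom.adjunction (𝟙_ C))
    (MonoidalCategory.leftUnitorNatIso C).hom Z
  rw [uncurry_eq]
  refine Eq.trans ?_ (h.trans ?_)
  · rfl
  · simp [Adjunction.id]

lemma gamma_eq (Z : C) : gamma s₀ Z = δ s₀ (S ⟹ Z) ≫ (ihom.ev S).app Z := by
  rw [← cancel_mono (unitIsoSelf (X := Z)).inv]
  rw [gamma, Category.assoc, Iso.hom_inv_id, Category.comp_id]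
  apply uncurry_injective (A := 𝟙_ C)
  rw [uncurry_eq, id_tensor_pre_app_comp_ev]
  rw [Category.assoc, uncurry_natural_left, uncurry_natural_left,
    uncurry_unitIsoSelf_inv]
  rw [show 𝟙_ C ◁ (ihom.ev S).app Z ≫ (λ_ Z).hom
      = (λ_ (S ⊗ (S ⟹ Z))).hom ≫ (ihom.ev S).app Z from
    MonoidalCategory.leftUnitor_naturality _]
  rw [← Category.assoc (𝟙_ C ◁ δ s₀ (S ⟹ Z)),
    show 𝟙_ C ◁ δ s₀ (S ⟹ Z) ≫ (λ_ (S ⊗ (S ⟹ Z))).hom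
        = (λ_ (S ⟹ Z)).hom ≫ δ s₀ (S ⟹ Z) from
      MonoidalCategory.leftUnitor_naturality _]
  rw [leftUnitor_hom_δ]

lemma comp_gamma {W Z : C} (k : W ⟶ (S ⟹ Z)) :
    k ≫ gamma s₀ Z = δ s₀ W ≫ uncurry k := by
  rw [gamma_eq, ← Category.assoc, δ_nat s₀ k, Category.assoc, ← uncurry_eq]

lemma curry_snd_comp_gamma (X : C) :
    curry (snd S (S ⊗ X)) ≫ gamma s₀ (S ⊗ X) = 𝟙 (S ⊗ X) := by
  rw [comp_gamma s₀ (curry (snd S (S ⊗ X))), uncurry_curry, δ_snd]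

lemma key (A : ((ihom.adjunction S).toMonad).Algebra) :
    curry (snd S (S ⊗ A.A)) ≫ A.a ≫ δ s₀ A.A ≫ curry (snd S (S ⊗ A.A)) ≫ A.a
      = curry (snd S (S ⊗ A.A)) ≫ A.a := by
  have hB : A.a ≫ δ s₀ A.A = δ s₀ (S ⟹ S ⊗ A.A) ≫ (S ◁ A.a) :=
    δ_nat (W := (S ⟹ S ⊗ A.A)) s₀ A.a
  have hC : (S ◁ A.a) ≫ curry (snd S (S ⊗ A.A))
      = curry (snd S (S ⊗ (S ⟹ S ⊗ A.A))) ≫ (ihom S).map (S ◁ A.a) := by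
    rw [← curry_natural_left, whiskerLeft_snd, ← curry_natural_right]
    exact rfl
  have hD : (ihom S).map (S ◁ A.a) ≫ A.a
      = ((ihom.adjunction S).toMonad).μ.app A.A ≫ A.a := A.assoc.symm
  have hμ : ((ihom.adjunction S).toMonad).μ.app A.A
      = (ihom S).map ((ihom.ev S).app (S ⊗ A.A)) := rfl
  have hE : δ s₀ (S ⟹ S ⊗ A.A) ≫ curry (snd S (S ⊗ (S ⟹ S ⊗ A.A)))
        ≫ ((ihom.adjunction S).toMonad).μ.app A.A
      = curry (snd S (S ⟹ S ⊗ A.A) ≫ gamma s₀ (S ⊗ A.A)) := by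
    erw [hμ, ← curry_natural_right, ← curry_natural_left]
    rw [whiskerLeft_snd_assoc]
    rw [gamma_eq]
  have hF : curry (snd S (S ⊗ A.A)) ≫ curry (snd S (S ⟹ S ⊗ A.A) ≫ gamma s₀ (S ⊗ A.A))
      = curry (snd S (S ⊗ A.A)) := by
    rw [← curry_natural_left, whiskerLeft_snd_assoc, curry_snd_comp_gamma,
      Category.comp_id]
  calc curry (snd S (S ⊗ A.A)) ≫ A.a ≫ δ s₀ A.A ≫ curry (snd S (S ⊗ A.A)) ≫ A.a
      = curry (snd S (S ⊗ A.A)) ≫ δ s₀ (S ⟹ S ⊗ A.A) ≫ (S ◁ A.a)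
          ≫ curry (snd S (S ⊗ A.A)) ≫ A.a := by
          erw [reassoc_of% hB]
          exact congrArg (fun t => curry (snd S (S ⊗ A.A)) ≫ t) (Category.assoc _ _ _)
    _ = curry (snd S (S ⊗ A.A)) ≫ δ s₀ (S ⟹ S ⊗ A.A)
          ≫ curry (snd S (S ⊗ (S ⟹ S ⊗ A.A))) ≫ (ihom S).map (S ◁ A.a) ≫ A.a := by
        erw [reassoc_of% hC]
        exact congrArg (fun t => curry (snd S (S ⊗ A.A)) ≫ δ s₀ (S ⟹ S ⊗ A.A) ≫ t)
          (Category.assoc _ _ _)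
    _ = curry (snd S (S ⊗ A.A)) ≫ δ s₀ (S ⟹ S ⊗ A.A)
          ≫ curry (snd S (S ⊗ (S ⟹ S ⊗ A.A)))
          ≫ ((ihom.adjunction S).toMonad).μ.app A.A ≫ A.a := by erw [hD]; rfl
    _ = curry (snd S (S ⊗ A.A))
          ≫ curry (snd S (S ⟹ S ⊗ A.A) ≫ gamma s₀ (S ⊗ A.A)) ≫ A.a := by
        erw [← hE]
        exact congrArg (fun t => curry (snd S (S ⊗ A.A)) ≫ t)
          ((Category.assoc _ _ _).trans
            (congrArg (fun t => δ s₀ (S ⟹ S ⊗ A.A) ≫ t) (Category.assoc _ _ _))).symm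
    _ = curry (snd S (S ⊗ A.A)) ≫ A.a := by erw [reassoc_of% hF]

end Stmt9Aux

theorem stmt9 (S : C) (s₀ : 𝟙_ C ⟶ S)
    (A : ((ihom.adjunction S).toMonad).Algebra)
    (Y : C) (e : S ⊗ A.A ⟶ Y) (m : Y ⟶ A.A)
    (hfac : MonoidalClosed.curry (snd S (S ⊗ A.A)) ≫ A.a = e ≫ m)
    (he : Epi e) (hm : Mono m) :
    (m ≫ ((ihom.adjunction S).toMonad).η.app A.A ≫ gamma s₀ (S ⊗ A.A)) ≫ e = 𝟙 Y := by
  have hη : ((ihom.adjunction S).toMonad).η.app A.A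
      = MonoidalClosed.curry (𝟙 (S ⊗ A.A)) := (MonoidalClosed.curry_id_eq_coev S A.A).symm
  have hA : ((ihom.adjunction S).toMonad).η.app A.A ≫ gamma s₀ (S ⊗ A.A)
      = Stmt9Aux.δ s₀ A.A := by
    erw [Stmt9Aux.comp_gamma (W := A.A) (Z := S ⊗ A.A) s₀ (((ihom.adjunction S).toMonad).η.app A.A),
      hη, MonoidalClosed.uncurry_curry, Category.comp_id]
  rw [← cancel_mono m, ← cancel_epi e]
  simp only [Category.assoc, Category.id_comp]
  rw [← reassoc_of% hfac, reassoc_of% hA, ← hfac]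
  exact (Category.assoc _ _ _).trans (Stmt9Aux.key s₀ A)
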